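/- Fix κ > 0 with ℙ(ω(0) ≥ κ) > 0. There exist constants 0 < C₁, C₂, C₃ < ∞ and M ∈ ℕ such that for all sufficiently large m there is an event A_m with ℙ(A_m^c) ≤ C₁ e^{−C₂ m} on which e(0,x,ω) ≤ e^{−C₃ m} holds simultaneously for all x ∈ Z^d with ‖x‖₁ = m. -/

import Mathlib

open MeasureTheory ProbabilityTheory Filter Set
open scoped ENNReal NNReal BigOperators Topology

namespace RWRP

/-- Sites of the lattice `ℤ^d`. -/
abbrev Site (d : ℕ) := Fin d → ℤ

variable {d : ℕ}

/-- ℓ¹ distance between two sites, as a natural number. -/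
def dist1 (u v : Site d) : ℕ := ∑ i, (u i - v i).natAbs

/-- ℓ¹ norm of a site, as a real number. -/
noncomputable def norm1 (x : Site d) : ℝ := ∑ i, |(x i : ℝ)|

/-- ℓ^∞ norm of a site, as a real number. -/
noncomputable def norminf (x : Site d) : ℝ :=
  ((Finset.univ.sup fun i => (x i).natAbs : ℕ) : ℝ)

/-- A nearest-neighbour path on `ℤ^d`, encoded as the list of its successive positions. -/
def IsNNPath (r : List (Site d)) : Prop := r.Chain' fun u v => dist1 u v = 1

/-- `AdmissiblePath V x y r` : `r` is a nearest-neighbour path from `x` to `y` which stays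
in `V` and visits `y` exactly at its final point.  Such paths are in natural bijection with
the trajectories of the simple random walk started at `x` and stopped at the hitting time
`H(y)`, restricted to the event `{H(y) < T_V}`. -/
def AdmissiblePath (V : Set (Site d)) (x y : Site d) (r : List (Site d)) : Prop :=
  IsNNPath r ∧ r.head? = some x ∧ r.getLast? = some y ∧
    (∀ z ∈ r.dropLast, z ≠ y) ∧ ∀ z ∈ r, z ∈ V

/-- The weight of a path `r` for the simple random walk in the potential `ω` :
`(2d)^{-(|r|-1)} exp(-∑_{k<|r|-1} ω(r_k))`.  The weight of `r` is exactly
`E^x[exp(-∑_{k=0}^{H(y)-1} ω(S_k)) ; (S_0, …, S_{H(y)}) = r]`. -/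
noncomputable def pathWeight (ω : Site d → ℝ) (r : List (Site d)) : ℝ≥0∞ :=
  (2 * (d : ℝ≥0∞))⁻¹ ^ (r.length - 1) *
    ENNReal.ofReal (Real.exp (-((r.dropLast.map ω).sum)))

/-- `eCostE ω V x y = E^x[exp(-∑_{k=0}^{H(y)-1} ω(S_k)) 1_{H(y) < T_V}]`, as an
extended nonnegative real. -/
noncomputable def eCostE (ω : Site d → ℝ) (V : Set (Site d)) (x y : Site d) : ℝ≥0∞ :=
  ∑' r : {r : List (Site d) // AdmissiblePath V x y r}, pathWeight ω r

/-- `eCost ω V x y = E^x[exp(-∑_{k=0}^{H(y)-1} ω(S_k)) 1_{H(y) < T_V}]`, as a real number. -/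
noncomputable def eCost (ω : Site d → ℝ) (V : Set (Site d)) (x y : Site d) : ℝ :=
  (eCostE ω V x y).toReal

/-- The travel cost `a_V(x,y,ω) = -log e_V(x,y,ω)`, real-valued. -/
noncomputable def aCost (ω : Site d → ℝ) (V : Set (Site d)) (x y : Site d) : ℝ :=
  -Real.log (eCost ω V x y)

/-- The travel cost `a_V(x,y,ω) = -log e_V(x,y,ω)` with values in `[0,∞]`
(it equals `∞` when `e_V(x,y,ω) = 0`, i.e. when no admissible path exists). -/
noncomputable def aCostE (ω : Site d → ℝ) (V : Set (Site d)) (x y : Site d) : ℝ≥0∞ :=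
  if eCostE ω V x y = 0 then ⊤ else ENNReal.ofReal (aCost ω V x y)

/-- The total weight of the admissible paths from `0` to `x` (in the whole lattice)
satisfying the additional condition `p`; equals
`E^0[exp(-∑_{k=0}^{H(x)-1} ω(S_k)) 1_{H(x)<∞} 1_{p}]`. -/
noncomputable def qMass (ω : Site d → ℝ) (x : Site d) (p : List (Site d) → Prop) : ℝ≥0∞ :=
  ∑' r : {r : List (Site d) // AdmissiblePath Set.univ 0 x r ∧ p r}, pathWeight ω r

/-- `qProb ω x p = Q_ω^{0,x}(p)`, the probability, under the weighted path measure
`Q_ω^{0,x}`, that the walk stopped at `H(x)` satisfies `p`. -/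
noncomputable def qProb (ω : Site d → ℝ) (x : Site d) (p : List (Site d) → Prop) : ℝ :=
  ((eCostE ω Set.univ 0 x)⁻¹ * qMass ω x p).toReal

/-- The number of distinct sites visited by the walk strictly before the end of the
path `r`, i.e. `#A` with `A = {S_k ; 0 ≤ k < H(x)}`. -/
noncomputable def rangeSize (r : List (Site d)) : ℕ := r.dropLast.toFinset.card

/-- `qIntegral ω x f = Ê_ω^{0,x}[f]`, the expectation of the path functional `f` under the
weighted path measure `Q_ω^{0,x}`. -/
noncomputable def qIntegral (ω : Site d → ℝ) (x : Site d) (f : List (Site d) → ℝ≥0∞) : ℝ :=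
  ((eCostE ω Set.univ 0 x)⁻¹ *
    ∑' r : {r : List (Site d) // AdmissiblePath Set.univ 0 x r}, pathWeight ω r.1 * f r.1).toReal

/-- `qRange ω x = Ê_ω^{0,x}[#A]`, the mean size of the range of the walk before hitting `x`
under the weighted path measure. -/
noncomputable def qRange (ω : Site d → ℝ) (x : Site d) : ℝ :=
  qIntegral ω x fun r => (rangeSize r : ℝ≥0∞)

/-- A path realizing the first return of the walk to the origin. -/
def ReturnPath (r : List (Site d)) : Prop :=
  IsNNPath r ∧ r.head? = some 0 ∧ r.getLast? = some 0 ∧ 2 ≤ r.length ∧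
    ∀ z ∈ r.dropLast.tail, z ≠ (0 : Site d)

/-- `returnProb d = P^0(H₂(0) < ∞)`, the probability that the simple random walk on `ℤ^d`
returns to its starting point. -/
noncomputable def returnProb (d : ℕ) : ℝ :=
  (∑' r : {r : List (Site d) // ReturnPath r}, pathWeight (fun _ : Site d => (0 : ℝ)) r.1).toReal

/-- The cube `[-C‖x‖₁, C‖x‖₁]^d ∩ ℤ^d`. -/
def box (x : Site d) (C : ℝ) : Set (Site d) := {z | ∀ i, |((z i : ℤ) : ℝ)| ≤ C * norm1 x}

/-- The truncated potential `ω̂ = ω ∧ (4d/γ) log ‖x‖₁`. -/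
noncomputable def trunc (γ : ℝ) (x : Site d) (ω : Site d → ℝ) : Site d → ℝ :=
  fun z => min (ω z) (4 * d / γ * Real.log (norm1 x))

/-- The entropy `Ent(X) = E[X log X] - E[X] log E[X]` of a random variable under `μ`. -/
noncomputable def entropy {Ω : Type*} [MeasurableSpace Ω] (μ : Measure Ω) (X : Ω → ℝ) : ℝ :=
  (∫ ω, X ω * Real.log (X ω) ∂μ) - (∫ ω, X ω ∂μ) * Real.log (∫ ω, X ω ∂μ)

lemma norm1_eq_dist1 (x : Site d) : norm1 x = (dist1 x 0 : ℝ) := by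
  simp [norm1, dist1, Nat.cast_natAbs]

lemma dist1_triangle (a b c : Site d) : dist1 a c ≤ dist1 a b + dist1 b c := by
  rw [dist1, dist1, dist1, ← Finset.sum_add_distrib]
  refine Finset.sum_le_sum fun i _ => ?_
  have : a i - c i = (a i - b i) + (b i - c i) := by ring
  rw [this]; exact Int.natAbs_add_le _ _

lemma list_ivt {α : Type*} (f : α → ℕ) :
    ∀ (l : List α) (a : α), (a :: l).Chain' (fun u v => f v ≤ f u + 1) →
      ∀ b ∈ a :: l, ∀ j, f a ≤ j → j ≤ f b → ∃ z ∈ a :: l, f z = j := by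
  intro l
  induction l with
  | nil =>
    intro a _ b hb j h1 h2
    simp only [List.mem_singleton] at hb
    subst hb
    exact ⟨b, by simp, by omega⟩
  | cons c l ih =>
    intro a hchain b hb j h1 h2
    have hstep : f c ≤ f a + 1 := (List.isChain_cons_cons.mp hchain).1
    have hchain' : (c :: l).Chain' (fun u v => f v ≤ f u + 1) := (List.isChain_cons_cons.mp hchain).2
    rcases List.mem_cons.mp hb with rfl | hb'
    · exact ⟨b, by simp, by omega⟩
    · by_cases hc : f c ≤ j
      · obtain ⟨z, hz, hfz⟩ := ih c hchain' b hb' j hc h2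
        exact ⟨z, List.mem_cons_of_mem _ hz, hfz⟩
      · exact ⟨a, by simp, by omega⟩

lemma exists_dropLast_dist {x : Site d} {r : List (Site d)}
    (h : AdmissiblePath Set.univ 0 x r) {j : ℕ} (hj : j < dist1 x 0) :
    ∃ z ∈ r.dropLast, dist1 z 0 = j := by
  obtain ⟨hNN, hhead, hlast, havoid, -⟩ := h
  have hne : r ≠ [] := by intro hnil; rw [hnil] at hhead; simp at hhead
  obtain ⟨a, l, rfl⟩ := List.exists_cons_of_ne_nil hne
  have ha : a = 0 := by simpa using hhead
  subst ha
  have hchain : ((0 : Site d) :: l).Chain' (fun u v => dist1 v 0 ≤ dist1 u 0 + 1) := by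
    refine List.IsChain.imp ?_ hNN
    intro u v huv
    calc dist1 v 0 ≤ dist1 v u + dist1 u 0 := dist1_triangle _ _ _
    _ ≤ dist1 u 0 + 1 := by
        have : dist1 v u = dist1 u v := by
          simp only [dist1]
          exact Finset.sum_congr rfl fun i _ => by omega
        omega
  have hxmem : x ∈ (0 : Site d) :: l := by
    have h1 := List.getLast?_eq_getLast (l := (0:Site d) :: l) (by simp)
    rw [h1] at hlast
    have h2 : ((0:Site d) :: l).getLast (by simp) = x := by injection hlast
    rw [← h2]; exact List.getLast_mem _
  have h0 : dist1 (0 : Site d) 0 = 0 := by simp [dist1]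
  obtain ⟨z, hz, hfz⟩ := list_ivt (fun z => dist1 z 0) l 0 hchain x hxmem j (by simp [dist1]) (le_of_lt hj)
  refine ⟨z, ?_, hfz⟩
  -- z ∈ r and z ≠ last, so z ∈ dropLast
  have hzx : z ≠ x := by intro hzx; rw [hzx] at hfz; omega
  have hsplit : (0:Site d) :: l = ((0:Site d)::l).dropLast ++ [((0:Site d)::l).getLast (by simp)] :=
    (List.dropLast_append_getLast (by simp)).symm
  have hlastx : ((0:Site d) :: l).getLast (by simp) = x := by
    have h1 := List.getLast?_eq_getLast (l := (0:Site d) :: l) (by simp)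
    rw [h1] at hlast; injection hlast
  rw [hsplit] at hz
  rcases List.mem_append.mp hz with h1 | h1
  · exact h1
  · simp only [List.mem_singleton] at h1; rw [hlastx] at h1; exact absurd h1 hzx

lemma card_dropLast_ge {x : Site d} {r : List (Site d)}
    (h : AdmissiblePath Set.univ 0 x r) : dist1 x 0 ≤ r.dropLast.toFinset.card := by
  classical
  set m := dist1 x 0 with hm
  have hch : ∀ j ∈ Finset.range m, ∃ z ∈ r.dropLast, dist1 z 0 = j := by
    intro j hj
    exact exists_dropLast_dist h (Finset.mem_range.mp hj)
  choose f hf1 hf2 using fun j (hj : j ∈ Finset.range m) => hch j hj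
  have hcard : (Finset.range m).card ≤ r.dropLast.toFinset.card := by
    apply Finset.card_le_card_of_injOn (fun j => if hj : j ∈ Finset.range m then f j hj else 0)
    · intro j hj
      simp only [Finset.mem_coe] at hj ⊢
      simp only [hj, dif_pos]
      exact List.mem_toFinset.mpr (hf1 j hj)
    · intro j1 hj1 j2 hj2 heq
      simp only [Finset.mem_coe] at hj1 hj2
      simp only [hj1, hj2, dif_pos] at heq
      have := hf2 j1 hj1
      rw [heq] at this
      rw [← this, hf2 j2 hj2]
  simpa using hcard

lemma sum_toFinset_le {α : Type*} [DecidableEq α] (f : α → ℝ) (hf : ∀ a, 0 ≤ f a) :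
    ∀ (l : List α), ∑ z ∈ l.toFinset, f z ≤ (l.map f).sum := by
  intro l
  induction l with
  | nil => simp
  | cons a l ih =>
    rw [List.toFinset_cons, List.map_cons, List.sum_cons]
    by_cases ha : a ∈ l.toFinset
    · rw [Finset.insert_eq_self.mpr ha]
      have := hf a; linarith
    · rw [Finset.sum_insert ha]; linarith

open Classical in
noncomputable def nbrs (y : Site d) : Finset (Site d) :=
  Finset.image (fun p : Fin d × Bool =>
    Function.update y p.1 (y p.1 + if p.2 then 1 else -1)) Finset.univ

lemma card_nbrs_le (y : Site d) : (nbrs y).card ≤ 2 * d := by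
  classical
  calc (nbrs y).card ≤ (Finset.univ : Finset (Fin d × Bool)).card := Finset.card_image_le
  _ = 2 * d := by simp [Fintype.card_prod]; ring

lemma mem_nbrs {y z : Site d} (h : dist1 y z = 1) : z ∈ nbrs y := by
  classical
  have hsum : ∑ i, (y i - z i).natAbs = 1 := h
  have hex : ∃ i, (y i - z i).natAbs ≠ 0 := by
    by_contra hc
    push_neg at hc
    rw [Finset.sum_eq_zero (fun i _ => hc i)] at hsum
    omega
  obtain ⟨i, hi⟩ := hex
  have hle : (y i - z i).natAbs ≤ 1 := hsum ▸ Finset.single_le_sum (f := fun i => (y i - z i).natAbs) (fun _ _ => Nat.zero_le _) (Finset.mem_univ i)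
  have hi1 : (y i - z i).natAbs = 1 := by omega
  have hrest : ∀ j, j ≠ i → (y j - z j).natAbs = 0 := by
    intro j hj
    have h2 : ∑ k ∈ Finset.univ.erase i, (y k - z k).natAbs = 0 := by
      have h3 : (∑ k ∈ Finset.univ.erase i, (y k - z k).natAbs) + (y i - z i).natAbs = 1 := by
        rw [Finset.sum_erase_add _ _ (Finset.mem_univ i)]; exact hsum
      omega
    have := Finset.sum_eq_zero_iff.mp h2 j (Finset.mem_erase.mpr ⟨hj, Finset.mem_univ j⟩)
    exact this
  simp only [nbrs, Finset.mem_image]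
  rcases Int.natAbs_eq_iff.mp hi1 with hcase | hcase
  · -- y i - z i = 1, so z i = y i - 1
    refine ⟨(i, false), Finset.mem_univ _, ?_⟩
    funext j
    by_cases hj : j = i
    · subst hj; simp only [Function.update_self]; norm_num; omega
    · rw [Function.update_of_ne hj]
      have := hrest j hj; omega
  · refine ⟨(i, true), Finset.mem_univ _, ?_⟩
    funext j
    by_cases hj : j = i
    · subst hj; simp only [Function.update_self]; norm_num; omega
    · rw [Function.update_of_ne hj]
      have := hrest j hj; omega

lemma admissible_self {V : Set (Site d)} {x : Site d} {r : List (Site d)}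
    (h : AdmissiblePath V x x r) : r = [x] := by
  obtain ⟨hNN, hhead, hlast, havoid, -⟩ := h
  match r with
  | [] => simp at hhead
  | [a] => simp at hhead; rw [hhead]
  | a :: b :: t =>
    exfalso
    have ha : a = x := by simpa using hhead
    have : a ∈ (a :: b :: t).dropLast := by rw [List.dropLast_cons₂]; simp
    exact havoid a this ha

lemma sum_weight_le_one_aux (hd : 1 ≤ d) (x : Site d) :
    ∀ (N : ℕ) (y : Site d) (F : Finset (List (Site d))),
      (∀ r ∈ F, AdmissiblePath Set.univ y x r ∧ r.length ≤ N + 1) →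
      ∑ r ∈ F, ((2 * (d : ℝ≥0∞))⁻¹) ^ (r.length - 1) ≤ 1 := by
  classical
  intro N
  induction N with
  | zero =>
    intro y F hF
    have hsub : F ⊆ {[x]} := by
      intro r hr
      obtain ⟨⟨hNN, hhead, hlast, havoid, -⟩, hlen⟩ := hF r hr
      match r, hlen with
      | [], _ => simp at hhead
      | [a], _ =>
        simp only [List.head?_cons, Option.some_inj] at hhead
        simp only [List.getLast?_singleton, Option.some_inj] at hlast
        simp only [Finset.mem_singleton]
        rw [hlast]
    calc ∑ r ∈ F, ((2 * (d : ℝ≥0∞))⁻¹) ^ (r.length - 1)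
        ≤ ∑ r ∈ ({[x]} : Finset (List (Site d))), ((2 * (d : ℝ≥0∞))⁻¹) ^ (r.length - 1) :=
          Finset.sum_le_sum_of_subset hsub
      _ = 1 := by simp
  | succ N ih =>
    intro y F hF
    by_cases hyx : y = x
    · subst hyx
      have hsub : F ⊆ {[y]} := by
        intro r hr
        have := admissible_self (hF r hr).1
        simp [this]
      calc ∑ r ∈ F, ((2 * (d : ℝ≥0∞))⁻¹) ^ (r.length - 1)
          ≤ ∑ r ∈ ({[y]} : Finset (List (Site d))), ((2 * (d : ℝ≥0∞))⁻¹) ^ (r.length - 1) :=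
            Finset.sum_le_sum_of_subset hsub
        _ = 1 := by simp
    · -- every path in F has length ≥ 2 and second element in nbrs y
      have hkey : ∀ r ∈ F, r.tail ≠ [] ∧ r.head? = some y ∧
          r.tail.headI ∈ nbrs y := by
        intro r hr
        obtain ⟨⟨hNN, hhead, hlast, havoid, -⟩, hlen⟩ := hF r hr
        match r with
        | [] => simp at hhead
        | [a] =>
          exfalso
          simp only [List.head?_cons, Option.some_inj] at hhead
          simp only [List.getLast?_singleton, Option.some_inj] at hlast
          exact hyx (by rw [← hhead]; exact hlast)
        | a :: b :: t =>
          refine ⟨by simp, hhead, ?_⟩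
          have ha : a = y := by simpa using hhead
          have hab : dist1 a b = 1 := (List.isChain_cons_cons.mp hNN).1
          simpa using mem_nbrs (ha ▸ hab)
      -- partition by second element
      have hmaps : ∀ r ∈ F, r.tail.headI ∈ nbrs y := fun r hr => (hkey r hr).2.2
      rw [← Finset.sum_fiberwise_of_maps_to hmaps]
      have hinner : ∀ z ∈ nbrs y,
          ∑ r ∈ F.filter (fun r => r.tail.headI = z), ((2 * (d : ℝ≥0∞))⁻¹) ^ (r.length - 1)
          ≤ (2 * (d : ℝ≥0∞))⁻¹ := by
        intro z hz
        set Fz := F.filter (fun r => r.tail.headI = z) with hFz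
        -- rewrite each weight
        have hw : ∀ r ∈ Fz, ((2 * (d : ℝ≥0∞))⁻¹) ^ (r.length - 1)
            = (2 * (d : ℝ≥0∞))⁻¹ * ((2 * (d : ℝ≥0∞))⁻¹) ^ (r.tail.length - 1) := by
          intro r hr
          have hr' : r ∈ F := Finset.mem_of_mem_filter r hr
          obtain ⟨htne, hhead, -⟩ := hkey r hr'
          have h1 : r.length - 1 = r.tail.length := by
            cases r with
            | nil => simp at hhead
            | cons a l => simp
          rw [h1]
          conv_lhs => rw [(Nat.succ_pred_eq_of_pos (List.length_pos_iff.mpr htne)).symm]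
          rw [pow_succ]
          simp only [Nat.pred_eq_sub_one]
          ring
        rw [Finset.sum_congr rfl hw, ← Finset.mul_sum]
        have htail : ∑ r ∈ Fz, ((2 * (d : ℝ≥0∞))⁻¹) ^ (r.tail.length - 1)
            = ∑ t ∈ Fz.image List.tail, ((2 * (d : ℝ≥0∞))⁻¹) ^ (t.length - 1) := by
          rw [Finset.sum_image]
          intro r hr s hs hts
          obtain ⟨-, hheadr, -⟩ := hkey r (Finset.mem_of_mem_filter r hr)
          obtain ⟨-, hheads, -⟩ := hkey s (Finset.mem_of_mem_filter s hs)
          rw [← List.cons_head?_tail hheadr, ← List.cons_head?_tail hheads, hts]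
        rw [htail]
        have hIH : ∑ t ∈ Fz.image List.tail, ((2 * (d : ℝ≥0∞))⁻¹) ^ (t.length - 1) ≤ 1 := by
          apply ih z
          intro t ht
          obtain ⟨r, hr, rfl⟩ := Finset.mem_image.mp ht
          have hrF : r ∈ F := Finset.mem_of_mem_filter r hr
          obtain ⟨⟨hNN, hhead, hlast, havoid, -⟩, hlen⟩ := hF r hrF
          obtain ⟨htne, -, -⟩ := hkey r hrF
          have hzsnd : r.tail.headI = z := by simpa [hFz] using (Finset.mem_filter.mp hr).2
          -- r = y' :: tail with y' = y
          match r, htne, hNN, hlast, havoid, hlen with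
          | a :: b :: t, _, hNN, hlast, havoid, hlen =>
            have ha : a = y := by simpa using hhead
            constructor
            · refine ⟨(List.isChain_cons_cons.mp hNN).2, ?_, ?_, ?_, fun _ _ => trivial⟩
              · simp only [List.tail_cons] at hzsnd ⊢
                simp [← hzsnd]
              · simpa using hlast
              · intro w hw
                apply havoid
                rw [List.dropLast_cons₂]
                exact List.mem_cons_of_mem _ hw
            · simpa using Nat.le_of_succ_le_succ hlen
        calc (2 * (d : ℝ≥0∞))⁻¹ * ∑ t ∈ Fz.image List.tail, ((2 * (d : ℝ≥0∞))⁻¹) ^ (t.length - 1)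
            ≤ (2 * (d : ℝ≥0∞))⁻¹ * 1 := by
              exact mul_le_mul_right hIH _
          _ = (2 * (d : ℝ≥0∞))⁻¹ := mul_one _
      calc ∑ z ∈ nbrs y, ∑ r ∈ F.filter (fun r => r.tail.headI = z),
            ((2 * (d : ℝ≥0∞))⁻¹) ^ (r.length - 1)
          ≤ ∑ _z ∈ nbrs y, (2 * (d : ℝ≥0∞))⁻¹ := Finset.sum_le_sum hinner
        _ = (nbrs y).card * (2 * (d : ℝ≥0∞))⁻¹ := by rw [Finset.sum_const, nsmul_eq_mul]
        _ ≤ (2 * d : ℕ) * (2 * (d : ℝ≥0∞))⁻¹ := by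
            apply mul_le_mul_left
            exact_mod_cast Nat.cast_le.mpr (card_nbrs_le y)
        _ = 1 := by
            have hd0 : (d : ℝ≥0∞) ≠ 0 := Nat.cast_ne_zero.mpr (by omega)
            have hcast : ((2 * d : ℕ) : ℝ≥0∞) = 2 * (d : ℝ≥0∞) := by push_cast; ring
            rw [hcast]
            exact ENNReal.mul_inv_cancel (mul_ne_zero two_ne_zero hd0)
              (ENNReal.mul_ne_top (by norm_num) (ENNReal.natCast_ne_top d))

lemma tsum_weight_le_one (hd : 1 ≤ d) (y x : Site d) :
    ∑' r : {r : List (Site d) // AdmissiblePath Set.univ y x r},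
      ((2 * (d : ℝ≥0∞))⁻¹) ^ (r.1.length - 1) ≤ 1 := by
  classical
  rw [ENNReal.tsum_eq_iSup_sum]
  refine iSup_le fun s => ?_
  have heq : ∑ r ∈ s, ((2 * (d : ℝ≥0∞))⁻¹) ^ (r.1.length - 1)
      = ∑ l ∈ s.image Subtype.val, ((2 * (d : ℝ≥0∞))⁻¹) ^ (l.length - 1) := by
    rw [Finset.sum_image]
    intro a _ b _ h
    exact Subtype.ext h
  rw [heq]
  apply sum_weight_le_one_aux hd x ((s.image Subtype.val).sup List.length) y
  intro r hr
  obtain ⟨⟨r', hadm⟩, hmem, rfl⟩ := Finset.mem_image.mp hr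
  exact ⟨hadm, le_trans (Finset.le_sup hr) (Nat.le_succ _)⟩

lemma measurable_listSum (l : List (Site d)) :
    Measurable (fun ω : Site d → ℝ => (l.map ω).sum) := by
  induction l with
  | nil => simpa using measurable_const
  | cons a l ih =>
    simp only [List.map_cons, List.sum_cons]
    exact (measurable_pi_apply a).add ih

lemma measurable_pathWeight (r : List (Site d)) :
    Measurable (fun ω : Site d → ℝ => pathWeight ω r) :=
  measurable_const.mul
    (ENNReal.measurable_ofReal.comp (Real.measurable_exp.comp (measurable_listSum r.dropLast).neg))

lemma measurable_eCostE (V : Set (Site d)) (x y : Site d) :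
    Measurable (fun ω : Site d → ℝ => eCostE ω V x y) :=
  Measurable.ennreal_tsum fun r => measurable_pathWeight r.1

lemma lintegral_prod_indep (μ : Measure ((Site d) → ℝ)) [IsProbabilityMeasure μ]
    (hindep : iIndepFun (fun z : Site d => fun ω => ω z) μ)
    (g : ℝ → ℝ≥0∞) (hg : Measurable g) (F : Finset (Site d)) :
    ∫⁻ ω, ∏ z ∈ F, g (ω z) ∂μ = ∏ z ∈ F, ∫⁻ ω, g (ω z) ∂μ := by
  classical
  have hind2 : iIndepFun
      (fun z ω => g (ω z)) μ := hindep.comp _ (fun _ => hg)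
  have hmeas : ∀ z : Site d, Measurable fun ω : Site d → ℝ => g (ω z) :=
    fun z => hg.comp (measurable_pi_apply z)
  induction F using Finset.induction with
  | empty => simp
  | @insert a F ha ih =>
    have hindAF : IndepFun (fun ω => ∏ z ∈ F, g (ω z)) (fun ω => g (ω a)) μ := by
      have h := iIndepFun.indepFun_finsetProd_of_notMem hind2 hmeas ha
      have he : (∏ j ∈ F, fun ω : Site d → ℝ => g (ω j)) = fun ω => ∏ z ∈ F, g (ω z) := by
        funext ω; simp
      rwa [he] at h
    have : ∫⁻ ω, g (ω a) * ∏ z ∈ F, g (ω z) ∂μ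
        = (∫⁻ ω, g (ω a) ∂μ) * ∫⁻ ω, ∏ z ∈ F, g (ω z) ∂μ := by
      have := lintegral_mul_eq_lintegral_mul_lintegral_of_indepFun
        (Finset.measurable_prod F (fun z _ => hmeas z)) (hmeas a) hindAF
      calc ∫⁻ ω, g (ω a) * ∏ z ∈ F, g (ω z) ∂μ
          = ∫⁻ ω, (∏ z ∈ F, g (ω z)) * g (ω a) ∂μ := by congr 1; funext ω; ring
        _ = (∫⁻ ω, ∏ z ∈ F, g (ω z) ∂μ) * ∫⁻ ω, g (ω a) ∂μ := this
        _ = (∫⁻ ω, g (ω a) ∂μ) * ∫⁻ ω, ∏ z ∈ F, g (ω z) ∂μ := by ring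
    calc ∫⁻ ω, ∏ z ∈ insert a F, g (ω z) ∂μ
        = ∫⁻ ω, g (ω a) * ∏ z ∈ F, g (ω z) ∂μ := by
          congr 1; funext ω; rw [Finset.prod_insert ha]
      _ = (∫⁻ ω, g (ω a) ∂μ) * ∫⁻ ω, ∏ z ∈ F, g (ω z) ∂μ := this
      _ = ∏ z ∈ insert a F, ∫⁻ ω, g (ω z) ∂μ := by
          rw [Finset.prod_insert ha, ih]

noncomputable def gexp : ℝ → ℝ≥0∞ := fun t => ENNReal.ofReal (Real.exp (-t))

lemma measurable_gexp : Measurable gexp :=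
  ENNReal.measurable_ofReal.comp (Real.measurable_exp.comp measurable_neg)

lemma ennreal_pow_anti {a : ℝ≥0∞} (ha : a ≤ 1) {m k : ℕ} (hmk : m ≤ k) : a ^ k ≤ a ^ m := by
  calc a ^ k = a ^ m * a ^ (k - m) := by rw [← pow_add]; congr 1; omega
    _ ≤ a ^ m * 1 := mul_le_mul_right (pow_le_one' ha _) _
    _ = a ^ m := mul_one _


lemma lintegral_gexp_eq (μ : Measure ((Site d) → ℝ)) [IsProbabilityMeasure μ]
    (hident : ∀ z : Site d, IdentDistrib (fun ω => ω z) (fun ω => ω 0) μ μ)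
    (z : Site d) : ∫⁻ ω, gexp (ω z) ∂μ = ∫⁻ ω, gexp (ω 0) ∂μ :=
  ((hident z).comp measurable_gexp).lintegral_eq

lemma rho_le (μ : Measure ((Site d) → ℝ)) [IsProbabilityMeasure μ]
    (hpos : ∀ᵐ ω ∂μ, ∀ z : Site d, 0 ≤ ω z) (κ : ℝ) :
    ∫⁻ ω, gexp (ω 0) ∂μ ≤
      ENNReal.ofReal (Real.exp (-κ)) * μ {ω | κ ≤ ω 0} + (1 - μ {ω | κ ≤ ω 0}) := by
  classical
  set S : Set ((Site d) → ℝ) := {ω | κ ≤ ω 0} with hS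
  have hSm : MeasurableSet S := measurableSet_le measurable_const (measurable_pi_apply 0)
  rw [← lintegral_add_compl (fun ω => gexp (ω 0)) hSm]
  gcongr
  · -- on S
    calc ∫⁻ ω in S, gexp (ω 0) ∂μ ≤ ∫⁻ _ω in S, ENNReal.ofReal (Real.exp (-κ)) ∂μ := by
          apply lintegral_mono_ae
          filter_upwards [ae_restrict_mem hSm] with ω hω
          exact ENNReal.ofReal_le_ofReal (Real.exp_le_exp.mpr (by simpa [hS] using hω))
      _ = ENNReal.ofReal (Real.exp (-κ)) * μ S := setLIntegral_const _ _
  · -- on Sᶜ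
    calc ∫⁻ ω in Sᶜ, gexp (ω 0) ∂μ ≤ ∫⁻ _ω in Sᶜ, 1 ∂μ := by
          apply lintegral_mono_ae
          filter_upwards [ae_restrict_of_ae hpos] with ω hω
          simp only [gexp]
          calc ENNReal.ofReal (Real.exp (-ω 0)) ≤ ENNReal.ofReal 1 :=
                ENNReal.ofReal_le_ofReal (Real.exp_le_one_iff.mpr (by linarith [hω 0]))
            _ = 1 := ENNReal.ofReal_one
      _ = μ Sᶜ := setLIntegral_one _
      _ = 1 - μ S := by
          rw [measure_compl hSm (measure_ne_top μ S), measure_univ]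

lemma lintegral_pathWeight_le (μ : Measure ((Site d) → ℝ)) [IsProbabilityMeasure μ]
    (hindep : iIndepFun (fun z : Site d => fun ω => ω z) μ)
    (hident : ∀ z : Site d, IdentDistrib (fun ω => ω z) (fun ω => ω 0) μ μ)
    (hpos : ∀ᵐ ω ∂μ, ∀ z : Site d, 0 ≤ ω z) (r : List (Site d)) :
    ∫⁻ ω, pathWeight ω r ∂μ ≤
      ((2 * (d : ℝ≥0∞))⁻¹) ^ (r.length - 1) *
        (∫⁻ ω, gexp (ω 0) ∂μ) ^ r.dropLast.toFinset.card := by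
  classical
  have h1 : ∫⁻ ω, pathWeight ω r ∂μ
      = ((2 * (d : ℝ≥0∞))⁻¹) ^ (r.length - 1) *
        ∫⁻ ω, ENNReal.ofReal (Real.exp (-((r.dropLast.map ω).sum))) ∂μ := by
    rw [← lintegral_const_mul]
    · rfl
    · exact ENNReal.measurable_ofReal.comp
        (Real.measurable_exp.comp ((by
          induction r.dropLast with
          | nil => simpa using measurable_const
          | cons a l ih => simp only [List.map_cons, List.sum_cons]; exact (measurable_pi_apply a).add ih
          : Measurable (fun ω : Site d → ℝ => (r.dropLast.map ω).sum))).neg)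
  rw [h1]
  gcongr
  calc ∫⁻ ω, ENNReal.ofReal (Real.exp (-((r.dropLast.map ω).sum))) ∂μ
      ≤ ∫⁻ ω, ∏ z ∈ r.dropLast.toFinset, gexp (ω z) ∂μ := by
        apply lintegral_mono_ae
        filter_upwards [hpos] with ω hω
        have hle : ∑ z ∈ r.dropLast.toFinset, ω z ≤ (r.dropLast.map ω).sum :=
          sum_toFinset_le ω (hω) r.dropLast
        calc ENNReal.ofReal (Real.exp (-((r.dropLast.map ω).sum)))
            ≤ ENNReal.ofReal (Real.exp (-(∑ z ∈ r.dropLast.toFinset, ω z))) :=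
              ENNReal.ofReal_le_ofReal (Real.exp_le_exp.mpr (by linarith))
          _ = ∏ z ∈ r.dropLast.toFinset, gexp (ω z) := by
              rw [show -(∑ z ∈ r.dropLast.toFinset, ω z) = ∑ z ∈ r.dropLast.toFinset, -(ω z) by
                rw [Finset.sum_neg_distrib], Real.exp_sum]
              exact ENNReal.ofReal_prod_of_nonneg fun i _ => (Real.exp_pos _).le
    _ = ∏ _z ∈ r.dropLast.toFinset, ∫⁻ ω, gexp (ω 0) ∂μ := by
        rw [lintegral_prod_indep μ hindep gexp measurable_gexp]
        exact Finset.prod_congr rfl fun z _ => lintegral_gexp_eq μ hident z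
    _ = (∫⁻ ω, gexp (ω 0) ∂μ) ^ r.dropLast.toFinset.card := Finset.prod_const _


/-- **Lemma 3.1.**  Fix `κ > 0` with `ℙ(ω(0) ≥ κ) > 0`.  There exist constants
`0 < C₁, C₂, C₃ < ∞` and a box size `M ∈ ℕ` such that for all sufficiently large `m`,
there is an event `A_m` with `ℙ(A_mᶜ) ≤ C₁ e^{-C₂ m}` on which `e(0,x) ≤ e^{-C₃ m}`
simultaneously for all `x ∈ ℤ^d` with `‖x‖₁ = m`. -/
theorem eCost_decay_on_good_event
    (d : ℕ) (hd : 2 ≤ d) (μ : Measure ((Site d) → ℝ)) [IsProbabilityMeasure μ]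
    (hindep : iIndepFun (fun z : Site d => fun ω => ω z) μ)
    (hident : ∀ z : Site d, IdentDistrib (fun ω => ω z) (fun ω => ω 0) μ μ)
    (hpos : ∀ᵐ ω ∂μ, ∀ z : Site d, 0 ≤ ω z)
    (hnontriv : μ {ω | ω 0 = 0} < 1)
    (κ : ℝ) (hκ : 0 < κ) (hκpos : 0 < μ {ω | κ ≤ ω 0}) :
    ∃ C₁ C₂ C₃ : ℝ, 0 < C₁ ∧ 0 < C₂ ∧ 0 < C₃ ∧ ∃ M : ℕ, 0 < M ∧
      ∃ m₀ : ℕ, ∀ m : ℕ, m₀ ≤ m →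
        ∃ A : Set ((Site d) → ℝ), MeasurableSet A ∧
          μ Aᶜ ≤ ENNReal.ofReal (C₁ * Real.exp (-C₂ * m)) ∧
          ∀ ω ∈ A, ∀ x : Site d, norm1 x = m →
            eCost ω Set.univ 0 x ≤ Real.exp (-C₃ * m) := by
  classical
  -- the probability p and the contraction factor ρ₀
  set p : ℝ≥0∞ := μ {ω | κ ≤ ω 0} with hp
  have hpfin : p ≠ ∞ := measure_ne_top μ _
  have hple : p ≤ 1 := prob_le_one
  set pr : ℝ := p.toReal with hpr
  have hpr0 : 0 < pr := ENNReal.toReal_pos (ne_of_gt hκpos) hpfin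
  have hpr1 : pr ≤ 1 := by
    rw [hpr]
    exact ENNReal.toReal_le_of_le_ofReal one_pos.le (by simpa using hple)
  set ρ₀ : ℝ := Real.exp (-κ) * pr + (1 - pr) with hρ₀
  have hρ₀pos : 0 < ρ₀ := by
    have := Real.exp_pos (-κ)
    nlinarith
  have hρ₀lt1 : ρ₀ < 1 := by
    have h1 : Real.exp (-κ) < 1 := Real.exp_lt_one_iff.mpr (by linarith)
    nlinarith
  -- the annealed factor
  set ρE : ℝ≥0∞ := ∫⁻ ω, gexp (ω 0) ∂μ with hρE
  have hρEle : ρE ≤ ENNReal.ofReal ρ₀ := by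
    refine le_trans (rho_le μ hpos κ) ?_
    have h1 : ENNReal.ofReal (Real.exp (-κ)) * p = ENNReal.ofReal (Real.exp (-κ) * pr) := by
      rw [ENNReal.ofReal_mul (Real.exp_pos _).le]
      congr 1
      rw [hpr, ENNReal.ofReal_toReal hpfin]
    have h2 : (1 : ℝ≥0∞) - p = ENNReal.ofReal (1 - pr) := by
      rw [ENNReal.ofReal_sub _ ENNReal.toReal_nonneg, ENNReal.ofReal_one,
        ENNReal.ofReal_toReal hpfin]
    rw [← hp, h1, h2, ← ENNReal.ofReal_add (by positivity) (by linarith)]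
  have hρ₀le1 : ENNReal.ofReal ρ₀ ≤ 1 := by
    rw [← ENNReal.ofReal_one]
    exact ENNReal.ofReal_le_ofReal hρ₀lt1.le
  -- constants
  set C₃ : ℝ := -Real.log ρ₀ / 2 with hC₃
  have hlogneg : Real.log ρ₀ < 0 := Real.log_neg hρ₀pos hρ₀lt1
  have hC₃pos : 0 < C₃ := by rw [hC₃]; linarith
  set C₂ : ℝ := C₃ / 2 with hC₂
  have hC₂pos : 0 < C₂ := by rw [hC₂]; linarith
  -- annealed bound for each x at distance m
  have hann : ∀ (m : ℕ) (x : Site d), dist1 x 0 = m →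
      ∫⁻ ω, eCostE ω Set.univ 0 x ∂μ ≤ (ENNReal.ofReal ρ₀) ^ m := by
    intro m x hx
    have h1 : ∫⁻ ω, eCostE ω Set.univ 0 x ∂μ
        = ∑' r : {r : List (Site d) // AdmissiblePath Set.univ 0 x r}, ∫⁻ ω, pathWeight ω r ∂μ :=
      lintegral_tsum fun r => (measurable_pathWeight r.1).aemeasurable
    rw [h1]
    have h2 : ∀ r : {r : List (Site d) // AdmissiblePath Set.univ 0 x r},
        ∫⁻ ω, pathWeight ω r ∂μ ≤
          ((2 * (d : ℝ≥0∞))⁻¹) ^ (r.1.length - 1) * (ENNReal.ofReal ρ₀) ^ m := by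
      intro r
      refine le_trans (lintegral_pathWeight_le μ hindep hident hpos r.1) ?_
      apply mul_le_mul_right
      calc ρE ^ r.1.dropLast.toFinset.card ≤ (ENNReal.ofReal ρ₀) ^ r.1.dropLast.toFinset.card :=
            pow_le_pow_left' hρEle _
        _ ≤ (ENNReal.ofReal ρ₀) ^ m :=
            ennreal_pow_anti hρ₀le1 (hx ▸ card_dropLast_ge r.2)
    calc ∑' r : {r : List (Site d) // AdmissiblePath Set.univ 0 x r}, ∫⁻ ω, pathWeight ω r ∂μ
        ≤ ∑' r : {r : List (Site d) // AdmissiblePath Set.univ 0 x r},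
            ((2 * (d : ℝ≥0∞))⁻¹) ^ (r.1.length - 1) * (ENNReal.ofReal ρ₀) ^ m :=
          ENNReal.tsum_le_tsum h2
      _ = (∑' r : {r : List (Site d) // AdmissiblePath Set.univ 0 x r},
            ((2 * (d : ℝ≥0∞))⁻¹) ^ (r.1.length - 1)) * (ENNReal.ofReal ρ₀) ^ m :=
          ENNReal.tsum_mul_right
      _ ≤ 1 * (ENNReal.ofReal ρ₀) ^ m :=
          mul_le_mul_left (tsum_weight_le_one (by omega) 0 x) _
      _ = (ENNReal.ofReal ρ₀) ^ m := one_mul _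
  -- Markov bound for each x at distance m
  have hmarkov : ∀ (m : ℕ) (x : Site d), dist1 x 0 = m →
      μ {ω | ENNReal.ofReal (Real.exp (-C₃ * m)) ≤ eCostE ω Set.univ 0 x}
        ≤ ENNReal.ofReal (Real.exp (-C₃ * m)) := by
    intro m x hx
    set ε : ℝ≥0∞ := ENNReal.ofReal (Real.exp (-C₃ * m)) with hε
    have hε0 : ε ≠ 0 := by
      rw [hε]; simp [Real.exp_pos]
    have hεtop : ε ≠ ∞ := ENNReal.ofReal_ne_top
    have h1 : ε * μ {ω | ε ≤ eCostE ω Set.univ 0 x} ≤ ∫⁻ ω, eCostE ω Set.univ 0 x ∂μ :=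
      mul_meas_ge_le_lintegral₀ (measurable_eCostE Set.univ 0 x).aemeasurable ε
    have h2 : μ {ω | ε ≤ eCostE ω Set.univ 0 x} ≤ (ENNReal.ofReal ρ₀) ^ m / ε := by
      rw [ENNReal.le_div_iff_mul_le (Or.inl hε0) (Or.inl hεtop)]
      calc μ {ω | ε ≤ eCostE ω Set.univ 0 x} * ε = ε * μ {ω | ε ≤ eCostE ω Set.univ 0 x} := by ring
        _ ≤ _ := le_trans h1 (hann m x hx)
    refine le_trans h2 ?_
    have hρpow : (ENNReal.ofReal ρ₀) ^ m = ENNReal.ofReal (ρ₀ ^ m) :=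
      (ENNReal.ofReal_pow hρ₀pos.le m).symm
    rw [hρpow, hε, ← ENNReal.ofReal_div_of_pos (Real.exp_pos _)]
    apply ENNReal.ofReal_le_ofReal
    have hρ₀m : ρ₀ ^ m = Real.exp ((m : ℝ) * Real.log ρ₀) := by
      conv_lhs => rw [← Real.exp_log hρ₀pos]
      rw [← Real.exp_nat_mul]
    rw [hρ₀m, ← Real.exp_sub]
    apply Real.exp_le_exp.mpr
    have : Real.log ρ₀ = -2 * C₃ := by rw [hC₃]; ring
    rw [this]; ring_nf
    nlinarith [Nat.cast_nonneg (α := ℝ) m, hC₃pos]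
  -- eventual polynomial vs exponential bound
  have hev : ∀ᶠ m : ℕ in atTop, ((2 * m + 1 : ℕ) : ℝ) ^ d ≤ Real.exp (C₂ * m) := by
    have h0 : Tendsto (fun y : ℝ => y ^ d * Real.exp (-y)) atTop (𝓝 0) :=
      Real.tendsto_pow_mul_exp_neg_atTop_nhds_zero d
    have h1 : Tendsto (fun m : ℕ => C₂ * m) atTop atTop :=
      Tendsto.const_mul_atTop hC₂pos tendsto_natCast_atTop_atTop
    have h2 : Tendsto (fun m : ℕ => (C₂ * m) ^ d * Real.exp (-(C₂ * m))) atTop (𝓝 0) :=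
      h0.comp h1
    have h3 : ∀ᶠ m : ℕ in atTop, (C₂ * m) ^ d * Real.exp (-(C₂ * m)) < (C₂ / 3) ^ d :=
      h2.eventually_lt_const (by positivity)
    filter_upwards [h3, eventually_ge_atTop 1] with m h3m h1m
    have hm1 : (1 : ℝ) ≤ m := by exact_mod_cast h1m
    have hstep1 : ((2 * m + 1 : ℕ) : ℝ) ≤ (3 / C₂) * (C₂ * m) := by
      push_cast
      have h5 : (3 / C₂) * (C₂ * (m:ℝ)) = 3 * m := by
        field_simp
      rw [h5]; linarith
    have hstep2 : ((2 * m + 1 : ℕ) : ℝ) ^ d ≤ ((3 / C₂) * (C₂ * m)) ^ d :=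
      pow_le_pow_left₀ (by positivity) hstep1 d
    have hstep3 : ((3 / C₂) * (C₂ * m)) ^ d = (3 / C₂) ^ d * (C₂ * m) ^ d := mul_pow _ _ _
    have hstep4 : (C₂ * m) ^ d < (C₂ / 3) ^ d * Real.exp (C₂ * m) := by
      have hexp : Real.exp (-(C₂ * m)) = (Real.exp (C₂ * m))⁻¹ := by
        rw [Real.exp_neg]
      rw [hexp] at h3m
      have hpos' : (0 : ℝ) < Real.exp (C₂ * m) := Real.exp_pos _
      calc (C₂ * m) ^ d = (C₂ * m) ^ d * (Real.exp (C₂ * m))⁻¹ * Real.exp (C₂ * m) := by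
            field_simp
        _ < (C₂ / 3) ^ d * Real.exp (C₂ * m) := by
            apply mul_lt_mul_of_pos_right h3m hpos'
    have hkey : (3 / C₂) ^ d * (C₂ / 3) ^ d = 1 := by
      rw [← mul_pow]
      have : (3 / C₂) * (C₂ / 3) = 1 := by field_simp
      rw [this, one_pow]
    calc ((2 * m + 1 : ℕ) : ℝ) ^ d ≤ (3 / C₂) ^ d * (C₂ * m) ^ d := by
          rw [← hstep3]; exact hstep2
      _ ≤ (3 / C₂) ^ d * ((C₂ / 3) ^ d * Real.exp (C₂ * m)) := by
          apply mul_le_mul_of_nonneg_left hstep4.le (by positivity)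
      _ = ((3 / C₂) ^ d * (C₂ / 3) ^ d) * Real.exp (C₂ * m) := by ring
      _ = Real.exp (C₂ * m) := by rw [hkey, one_mul]
  obtain ⟨m₀', hm₀'⟩ := eventually_atTop.mp hev
  refine ⟨1, C₂, C₃, one_pos, hC₂pos, hC₃pos, 1, one_pos, max m₀' 1, ?_⟩
  intro m hm
  have hmm₀ : m₀' ≤ m := le_trans (le_max_left _ _) hm
  have hm1 : 1 ≤ m := le_trans (le_max_right _ _) hm
  set ε : ℝ≥0∞ := ENNReal.ofReal (Real.exp (-C₃ * m)) with hεdef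
  set A : Set ((Site d) → ℝ) :=
    ⋂ (x : Site d), {ω | norm1 x = (m : ℝ) → eCostE ω Set.univ 0 x ≤ ε} with hA
  have hAmeas : MeasurableSet A := by
    apply MeasurableSet.iInter
    intro x
    by_cases hx : norm1 x = (m : ℝ)
    · have : {ω : (Site d) → ℝ | norm1 x = (m : ℝ) → eCostE ω Set.univ 0 x ≤ ε}
          = {ω | eCostE ω Set.univ 0 x ≤ ε} := by
        ext ω; simp [hx]
      rw [this]
      exact measurableSet_le (measurable_eCostE Set.univ 0 x) measurable_const
    · have : {ω : (Site d) → ℝ | norm1 x = (m : ℝ) → eCostE ω Set.univ 0 x ≤ ε} = Set.univ := by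
        ext ω; simp [hx]
      rw [this]
      exact MeasurableSet.univ
  refine ⟨A, hAmeas, ?_, ?_⟩
  · -- complement bound
    set T : Finset (Site d) :=
      (Finset.Icc (fun _ => -(m : ℤ)) (fun _ => (m : ℤ))).filter (fun x => dist1 x 0 = m) with hT
    have hsub : Aᶜ ⊆ ⋃ x ∈ T, {ω | ε ≤ eCostE ω Set.univ 0 x} := by
      intro ω hω
      simp only [hA, Set.mem_compl_iff, Set.mem_iInter, not_forall] at hω
      obtain ⟨x, hωx⟩ := hω
      obtain ⟨hx, hnle⟩ := Classical.not_imp.mp hωx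
      have hdist : dist1 x 0 = m := by
        have := norm1_eq_dist1 x
        rw [hx] at this
        exact_mod_cast this.symm
      have hxT : x ∈ T := by
        rw [hT, Finset.mem_filter]
        refine ⟨Finset.mem_Icc.mpr ⟨?_, ?_⟩, hdist⟩
        · intro i
          show -(m : ℤ) ≤ x i
          have h1 : (x i - (0 : Site d) i).natAbs ≤ dist1 x 0 :=
            Finset.single_le_sum (f := fun i => (x i - (0 : Site d) i).natAbs)
              (fun _ _ => Nat.zero_le _) (Finset.mem_univ i)
          simp only [Pi.zero_apply, sub_zero] at h1
          rw [hdist] at h1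
          omega
        · intro i
          show x i ≤ (m : ℤ)
          have h1 : (x i - (0 : Site d) i).natAbs ≤ dist1 x 0 :=
            Finset.single_le_sum (f := fun i => (x i - (0 : Site d) i).natAbs)
              (fun _ _ => Nat.zero_le _) (Finset.mem_univ i)
          simp only [Pi.zero_apply, sub_zero] at h1
          rw [hdist] at h1
          omega
      exact Set.mem_biUnion hxT (le_of_lt (not_le.mp hnle))
    have hcard : T.card ≤ (2 * m + 1) ^ d := by
      calc T.card ≤ ((Finset.Icc (fun _ => -(m : ℤ)) (fun _ => (m : ℤ))) : Finset (Site d)).card :=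
            Finset.card_filter_le _ _
        _ = (2 * m + 1) ^ d := by
            rw [Pi.card_Icc]
            have : ∀ i : Fin d, (Finset.Icc (-(m : ℤ)) (m : ℤ)).card = 2 * m + 1 := by
              intro i
              rw [Int.card_Icc]
              omega
            rw [Finset.prod_congr rfl (fun i _ => this i), Finset.prod_const,
              Finset.card_univ, Fintype.card_fin]
    calc μ Aᶜ ≤ μ (⋃ x ∈ T, {ω | ε ≤ eCostE ω Set.univ 0 x}) := measure_mono hsub
      _ ≤ ∑ x ∈ T, μ {ω | ε ≤ eCostE ω Set.univ 0 x} := measure_biUnion_finset_le T _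
      _ ≤ ∑ _x ∈ T, ε := by
          apply Finset.sum_le_sum
          intro x hx
          exact hmarkov m x (Finset.mem_filter.mp hx).2
      _ = (T.card : ℝ≥0∞) * ε := by rw [Finset.sum_const, nsmul_eq_mul]
      _ ≤ (((2 * m + 1) ^ d : ℕ) : ℝ≥0∞) * ε := by
          apply mul_le_mul_left
          exact_mod_cast Nat.cast_le.mpr hcard
      _ ≤ ENNReal.ofReal (1 * Real.exp (-C₂ * m)) := by
          rw [hεdef]
          have hc : (((2 * m + 1) ^ d : ℕ) : ℝ≥0∞)
              = ENNReal.ofReal (((2 * m + 1 : ℕ) : ℝ) ^ d) := by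
            rw [ENNReal.ofReal_pow (by positivity), ENNReal.ofReal_natCast]
            push_cast
            ring
          rw [hc, ← ENNReal.ofReal_mul (by positivity)]
          apply ENNReal.ofReal_le_ofReal
          rw [one_mul]
          calc ((2 * m + 1 : ℕ) : ℝ) ^ d * Real.exp (-C₃ * m)
              ≤ Real.exp (C₂ * m) * Real.exp (-C₃ * m) := by
                apply mul_le_mul_of_nonneg_right (hm₀' m hmm₀) (Real.exp_pos _).le
            _ = Real.exp (C₂ * m + -C₃ * m) := (Real.exp_add _ _).symm
            _ = Real.exp (-C₂ * m) := by
                congr 1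
                rw [hC₂]; ring
  · -- on the event
    intro ω hω x hx
    rw [hA, Set.mem_iInter] at hω
    have h1 : eCostE ω Set.univ 0 x ≤ ε := hω x hx
    rw [hεdef] at h1
    exact ENNReal.toReal_le_of_le_ofReal (Real.exp_pos _).le h1

end RWRP
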